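/- There is no PDL(CFL) formula expressing the property ⟨aⁿ⟩[bⁿ]p: for every finite collection C of context-free languages and every PDL(C) formula φ, there exist two finite LTSs T₁, T₂ over {a,b} such that T₁ satisfies the property '∃n ≥ 1: some a-path of length n leads to a state from which all b-paths of length n end in a p-state', T₂ does not, yet neither initial state is distinguished by φ. -/

import Mathlib

/-- A labelled transition system with edge labels in `α` and atomic propositions `P`. -/
structure LTS (α P : Type) where
  S : Type
  trans : S → α → S → Prop
  label : S → P → Prop

/-- A path in an LTS labelled by a word. -/
inductive LTS.Path {α P : Type} (T : LTS α P) : T.S → List α → T.S → Prop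
  | refl (s : T.S) : LTS.Path T s [] s
  | step {s : T.S} {a : α} {s' : T.S} {w : List α} {t : T.S} :
      T.trans s a s' → LTS.Path T s' w t → LTS.Path T s (a :: w) t

/-- Formulas of propositional dynamic logic over an arbitrary class of
`α`-languages (each modality carries a language). -/
inductive PDLFormula (α P : Type) : Type 1
  | atom : P → PDLFormula α P
  | neg : PDLFormula α P → PDLFormula α P
  | or : PDLFormula α P → PDLFormula α P → PDLFormula α P
  | and : PDLFormula α P → PDLFormula α P → PDLFormula α P
  | dia : Language α → PDLFormula α P → PDLFormula α P
  | box : Language α → PDLFormula α P → PDLFormula α P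

/-- Semantics of PDL formulas over an LTS. -/
def Sat {α P : Type} (T : LTS α P) : T.S → PDLFormula α P → Prop
  | s, .atom p => T.label s p
  | s, .neg φ => ¬ Sat T s φ
  | s, .or φ ψ => Sat T s φ ∨ Sat T s ψ
  | s, .and φ ψ => Sat T s φ ∧ Sat T s ψ
  | s, .dia L φ => ∃ (w : List α) (t : T.S), w ∈ L ∧ T.Path s w t ∧ Sat T t φ
  | s, .box L φ => ∀ (w : List α) (t : T.S), w ∈ L → T.Path s w t → Sat T t φ

/-- Modal depth of a PDL formula. -/
def md {α P : Type} : PDLFormula α P → ℕ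
  | .atom _ => 0
  | .neg φ => md φ + 1
  | .or φ ψ => max (md φ) (md ψ)
  | .and φ ψ => max (md φ) (md ψ)
  | .dia _ φ => md φ + 1
  | .box _ φ => md φ + 1

/-- The formula only uses languages from the class `C`, i.e. it is a `PDL(C)` formula. -/
def UsesLangs {α P : Type} (C : Set (Language α)) : PDLFormula α P → Prop
  | .atom _ => True
  | .neg φ => UsesLangs C φ
  | .or φ ψ => UsesLangs C φ ∧ UsesLangs C ψ
  | .and φ ψ => UsesLangs C φ ∧ UsesLangs C ψ
  | .dia L φ => L ∈ C ∧ UsesLangs C φ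
  | .box L φ => L ∈ C ∧ UsesLangs C φ

/-- A two-letter alphabet `{a, b}`. -/
inductive AB : Type
  | a | b
  deriving DecidableEq

/-- The property `⟨aⁿ⟩[bⁿ]p` at a state `s₀`: there is `n ≥ 1` and an `a`-labelled
path of length `n` from `s₀` to some state `s` such that every `b`-labelled path of
length `n` from `s` ends in a state satisfying `p`. -/
def DiaBoxProp (T : LTS AB Unit) (s₀ : T.S) : Prop :=
  ∃ n : ℕ, 1 ≤ n ∧ ∃ s : T.S, T.Path s₀ (List.replicate n AB.a) s ∧
    ∀ t : T.S, T.Path s (List.replicate n AB.b) t → T.label t ()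



namespace CFPump
set_option linter.unusedSectionVars false

open ContextFreeGrammar ContextFreeRule Symbol

variable {T : Type} [DecidableEq T]

/-- number of occurrences of a distinguished terminal -/
def bc (t₀ : T) (w : List T) : ℕ := w.count t₀

/-- step-counted derivations -/
inductive DerIn (g : ContextFreeGrammar T) :
    List (Symbol T g.NT) → List (Symbol T g.NT) → ℕ → Prop
  | refl (u : List (Symbol T g.NT)) : DerIn g u u 0
  | head {u v w : List (Symbol T g.NT)} {n : ℕ} :
      g.Produces u v → DerIn g v w n → DerIn g u w (n + 1)

variable {g : ContextFreeGrammar T}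

lemma DerIn.toDerives {u v n} (h : DerIn g u v n) : g.Derives u v := by
  induction h with
  | refl => rfl
  | head hp _ ih => exact hp.trans_derives ih

lemma derives_derIn {u v} (h : g.Derives u v) : ∃ n, DerIn g u v n := by
  induction h using Relation.ReflTransGen.head_induction_on with
  | refl => exact ⟨0, .refl v⟩
  | head hp _ ih => obtain ⟨n, hn⟩ := ih; exact ⟨n + 1, .head hp hn⟩

lemma DerIn.trans {u v w m n} (h1 : DerIn g u v m) (h2 : DerIn g v w n) :
    DerIn g u w (m + n) := by
  induction h1 with
  | refl => simpa using h2
  | head hp _ ih => exact (Nat.succ_add _ _) ▸ .head hp (ih h2)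

lemma DerIn.append_left {u v n} (h : DerIn g u v n) (p : List (Symbol T g.NT)) :
    DerIn g (p ++ u) (p ++ v) n := by
  induction h with
  | refl => exact .refl _
  | head hp _ ih =>
      obtain ⟨r, hr, hrw⟩ := hp
      exact .head ⟨r, hr, hrw.append_left p⟩ ih

lemma DerIn.append_right {u v n} (h : DerIn g u v n) (p : List (Symbol T g.NT)) :
    DerIn g (u ++ p) (v ++ p) n := by
  induction h with
  | refl => exact .refl _
  | head hp _ ih =>
      obtain ⟨r, hr, hrw⟩ := hp
      exact .head ⟨r, hr, hrw.append_right p⟩ ih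

lemma rewrites_append_split {N : Type*} {r : ContextFreeRule T N} {u v z : List (Symbol T N)}
    (h : r.Rewrites (u ++ v) z) :
    (∃ u', r.Rewrites u u' ∧ z = u' ++ v) ∨ (∃ v', r.Rewrites v v' ∧ z = u ++ v') := by
  induction u generalizing z with
  | nil => exact .inr ⟨z, by simpa using h, by simp⟩
  | cons s u' ih =>
      cases h with
      | head tail =>
          exact .inl ⟨r.output ++ u', Rewrites.head u', by simp⟩
      | cons _ hrs =>
          rcases ih hrs with ⟨u'', h', rfl⟩ | ⟨v', h', rfl⟩
          · exact .inl ⟨s :: u'', h'.cons s, by simp⟩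
          · exact .inr ⟨v', h', by simp⟩

lemma produces_append_split {u v z : List (Symbol T g.NT)} (h : g.Produces (u ++ v) z) :
    (∃ u', g.Produces u u' ∧ z = u' ++ v) ∨ (∃ v', g.Produces v v' ∧ z = u ++ v') := by
  obtain ⟨r, hr, hrw⟩ := h
  rcases rewrites_append_split hrw with ⟨u', h', rfl⟩ | ⟨v', h', rfl⟩
  · exact .inl ⟨u', ⟨r, hr, h'⟩, rfl⟩
  · exact .inr ⟨v', ⟨r, hr, h'⟩, rfl⟩

lemma derIn_append_split {u v w : List (Symbol T g.NT)} {n : ℕ}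
    (h : DerIn g (u ++ v) w n) :
    ∃ w₁ w₂ n₁ n₂, w = w₁ ++ w₂ ∧ n₁ + n₂ = n ∧ DerIn g u w₁ n₁ ∧ DerIn g v w₂ n₂ := by
  induction n generalizing u v with
  | zero =>
      cases h
      exact ⟨u, v, 0, 0, rfl, rfl, .refl u, .refl v⟩
  | succ n ih =>
      rcases h with _ | @⟨_, z, _, _, hp, hder⟩
      rcases produces_append_split hp with ⟨u', h', rfl⟩ | ⟨v', h', rfl⟩
      · obtain ⟨w₁, w₂, n₁, n₂, rfl, hn, hd1, hd2⟩ := ih hder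
        exact ⟨w₁, w₂, n₁ + 1, n₂, rfl, by omega, .head h' hd1, hd2⟩
      · obtain ⟨w₁, w₂, n₁, n₂, rfl, hn, hd1, hd2⟩ := ih hder
        exact ⟨w₁, w₂, n₁, n₂ + 1, rfl, by omega, hd1, .head h' hd2⟩

lemma rewrites_input_mem {N : Type*} {r : ContextFreeRule T N} {u v : List (Symbol T N)}
    (h : r.Rewrites u v) : Symbol.nonterminal r.input ∈ u := by
  obtain ⟨p, q, rfl, -⟩ := h.exists_parts
  simp

lemma derIn_terminal {w : List T} {v : List (Symbol T g.NT)} {n : ℕ}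
    (h : DerIn g (w.map Symbol.terminal) v n) : v = w.map Symbol.terminal := by
  cases h with
  | refl => rfl
  | head hp _ =>
      obtain ⟨r, _, hrw⟩ := hp
      have := rewrites_input_mem hrw
      simp only [List.mem_map] at this
      obtain ⟨x, -, hx⟩ := this
      exact absurd hx (by simp)

lemma derIn_nt_head {A : g.NT} {w : List T} {n : ℕ}
    (h : DerIn g [Symbol.nonterminal A] (w.map Symbol.terminal) n) :
    ∃ r ∈ g.rules, r.input = A ∧ ∃ n', n = n' + 1 ∧
      DerIn g r.output (w.map Symbol.terminal) n' := by
  generalize hww : w.map (Symbol.terminal : T → Symbol T g.NT) = ww at h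
  cases h with
  | refl =>
      exfalso
      rcases w with - | ⟨x, w⟩ <;> simp_all
  | head hp hder =>
      subst hww
      obtain ⟨r, hr, hrw⟩ := hp
      obtain ⟨p, q, hu, hv⟩ := hrw.exists_parts
      have hp0 : p = [] ∧ q = [] := by
        have := congrArg List.length hu
        simp at this
        constructor <;> [exact List.eq_nil_of_length_eq_zero (by omega);
          exact List.eq_nil_of_length_eq_zero (by omega)]
      obtain ⟨rfl, rfl⟩ := hp0
      simp at hu hv
      exact ⟨r, hr, hu.symm, _, rfl, hv ▸ hder⟩



variable (t₀ : T)

lemma map_eq_append_split {w : List T} {v₁ v₂ : List (Symbol T g.NT)}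
    (h : w.map Symbol.terminal = v₁ ++ v₂) :
    ∃ w₁ w₂, w = w₁ ++ w₂ ∧ v₁ = w₁.map Symbol.terminal ∧ v₂ = w₂.map Symbol.terminal := by
  rcases List.map_eq_append_iff.mp h with ⟨w₁, w₂, rfl, h1, h2⟩
  exact ⟨w₁, w₂, rfl, h1.symm, h2.symm⟩

lemma exists_fat :
    ∀ (L : List (Symbol T g.NT)) (w : List T) (n : ℕ),
    DerIn g L (w.map Symbol.terminal) n → 1 ≤ bc t₀ w →
    ∃ (pre post : List (Symbol T g.NT)) (s : Symbol T g.NT) (w₁ wm w₂ : List T) (n' : ℕ),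
      L = pre ++ [s] ++ post ∧ w = w₁ ++ wm ++ w₂ ∧ n' ≤ n ∧
      DerIn g [s] (wm.map Symbol.terminal) n' ∧
      g.Derives pre (w₁.map Symbol.terminal) ∧ g.Derives post (w₂.map Symbol.terminal) ∧
      bc t₀ w ≤ L.length * bc t₀ wm := by
  intro L
  induction L with
  | nil =>
      intro w n h hw
      exfalso
      have : w.map (Symbol.terminal : T → Symbol T g.NT) = [] := by
        have h2 : DerIn g ((([] : List T)).map Symbol.terminal) (w.map Symbol.terminal) n := by
          simpa using h
        simpa using (derIn_terminal h2).symm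
      have : w = [] := by simpa using this
      subst this
      simp [bc] at hw
  | cons s L' ih =>
      intro w n h hw
      have h' : DerIn g ([s] ++ L') (w.map Symbol.terminal) n := by simpa using h
      obtain ⟨v₁, v₂, n₁, n₂, hw12, hn, hd1, hd2⟩ := derIn_append_split h'
      obtain ⟨w₁, w₂, rfl, rfl, rfl⟩ := map_eq_append_split hw12
      have hbcw : bc t₀ (w₁ ++ w₂) = bc t₀ w₁ + bc t₀ w₂ := List.count_append
      by_cases hcase : bc t₀ (w₁ ++ w₂) ≤ (L'.length + 1) * bc t₀ w₁
      · refine ⟨[], L', s, [], w₁, w₂, n₁, by simp, by simp, by omega, hd1, ?_, hd2.toDerives, ?_⟩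
        · simp; rfl
        · simpa using hcase
      · have hw2 : 1 ≤ bc t₀ w₂ := by
          rcases Nat.eq_zero_or_pos (bc t₀ w₂) with h0 | h1
          · exfalso
            apply hcase
            have : bc t₀ (w₁ ++ w₂) = bc t₀ w₁ := by omega
            rw [this]
            have : 1 ≤ bc t₀ w₁ := by omega
            nlinarith
          · exact h1
        obtain ⟨pre', post', s', u₁, um, u₂, n'', hL', hw2eq, hn'', hdm, hpre', hpost', hbound⟩ :=
          ih w₂ n₂ hd2 hw2
        refine ⟨s :: pre', post', s', w₁ ++ u₁, um, u₂, n'', by simp [hL'], ?_, by omega, hdm,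
          ?_, hpost', ?_⟩
        · rw [hw2eq]; simp
        · -- Derives (s :: pre') ((w₁ ++ u₁).map terminal)
          have h1 : g.Derives ([s] ++ pre') ((w₁.map Symbol.terminal) ++ pre') :=
            Derives.append_right hd1.toDerives pre'
          have h2 : g.Derives ((w₁.map Symbol.terminal) ++ pre')
              ((w₁.map Symbol.terminal) ++ (u₁.map Symbol.terminal)) :=
            Derives.append_left hpre' _
          have := h1.trans h2
          simpa using this
        · -- bound
          have hlen : (s :: L').length = L'.length + 1 := rfl
          rw [hlen]
          have hsplit : bc t₀ w₂ = bc t₀ u₁ + bc t₀ um + bc t₀ u₂ := by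
            rw [hw2eq]
            simp [bc, List.count_append]
            omega
          have hnot : (L'.length + 1) * bc t₀ w₁ < bc t₀ w₁ + bc t₀ w₂ := by
            omega
          have hL'pos : 1 ≤ L'.length := by
            by_contra hL0
            have : L'.length = 0 := by omega
            rw [this] at hbound
            simp at hbound
            omega
          have hw1um : bc t₀ w₁ < bc t₀ um := by
            nlinarith
          calc bc t₀ (w₁ ++ w₂) = bc t₀ w₁ + bc t₀ w₂ := hbcw
            _ ≤ bc t₀ w₁ + L'.length * bc t₀ um := by omega
            _ ≤ (L'.length + 1) * bc t₀ um := by nlinarith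


open Classical in
/-- the set of nonterminals occurring as rule inputs -/
noncomputable def inputsF (g : ContextFreeGrammar T) : Finset g.NT :=
  g.rules.image ContextFreeRule.input

/-- bound on rule output lengths, positive -/
noncomputable def qb (g : ContextFreeGrammar T) : ℕ :=
  (g.rules.sup fun r => r.output.length) + 1

lemma qb_pos : 1 ≤ qb g := Nat.succ_le_succ (Nat.zero_le _)

lemma output_len_le {r : ContextFreeRule T g.NT} (hr : r ∈ g.rules) :
    r.output.length ≤ qb g :=
  le_trans (Finset.le_sup (f := fun r => r.output.length) hr) (Nat.le_succ _)

lemma input_mem_inputsF {r : ContextFreeRule T g.NT} (hr : r ∈ g.rules) :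
    r.input ∈ inputsF g := by
  classical
  exact Finset.mem_image_of_mem _ hr

/-- absolute pumping decomposition -/
def ExtAbs (g : ContextFreeGrammar T) (t₀ : T) (A : g.NT) (w : List T) : Prop :=
  ∃ (B : g.NT) (w₁ x z y w₂ : List T),
    w = w₁ ++ x ++ z ++ y ++ w₂ ∧
    g.Derives [Symbol.nonterminal A]
      (w₁.map Symbol.terminal ++ [Symbol.nonterminal B] ++ w₂.map Symbol.terminal) ∧
    g.Derives [Symbol.nonterminal B]
      (x.map Symbol.terminal ++ [Symbol.nonterminal B] ++ y.map Symbol.terminal) ∧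
    g.Derives [Symbol.nonterminal B] (z.map Symbol.terminal) ∧
    1 ≤ bc t₀ x + bc t₀ y

/-- relative decomposition: an occurrence of `B` with grounded context inside yield of `A` -/
def RelDec (g : ContextFreeGrammar T) (A : g.NT) (w : List T) (B : g.NT) : Prop :=
  ∃ x z y : List T,
    w = x ++ z ++ y ∧
    g.Derives [Symbol.nonterminal A]
      (x.map Symbol.terminal ++ [Symbol.nonterminal B] ++ y.map Symbol.terminal) ∧
    g.Derives [Symbol.nonterminal B] (z.map Symbol.terminal)

lemma core :
    ∀ n : ℕ, ∀ (V : Finset g.NT) (A : g.NT) (w : List T),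
    DerIn g [Symbol.nonterminal A] (w.map Symbol.terminal) n →
    V ⊆ inputsF g →
    qb g ^ ((inputsF g).card + 1 - V.card) < bc t₀ w →
    ExtAbs g t₀ A w ∨ ∃ B ∈ V, RelDec g A w B := by
  intro n
  induction n using Nat.strong_induction_on with
  | _ n IH =>
    intro V A w hder hV hbig
    classical
    have hKcard : V.card ≤ (inputsF g).card := Finset.card_le_card hV
    have hexp1 : 1 ≤ (inputsF g).card + 1 - V.card := by omega
    have hq1 : qb g ≤ qb g ^ ((inputsF g).card + 1 - V.card) :=
      Nat.le_self_pow (by omega) _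
    have hbcw : 1 ≤ bc t₀ w := by
      have := qb_pos (g := g)
      have : 1 ≤ qb g ^ ((inputsF g).card + 1 - V.card) := Nat.one_le_pow _ _ (by omega)
      omega
    by_cases hAV : A ∈ V
    · refine .inr ⟨A, hAV, [], w, [], by simp, ?_, hder.toDerives⟩
      simpa using Derives.refl (g := g) [Symbol.nonterminal A]
    · obtain ⟨r, hr, hrA, n', rfl, hout⟩ := derIn_nt_head hder
      obtain ⟨pre, post, s, w₁, wm, w₂, n'', hLeq, hweq, hn'', hdm, hpre, hpost, hbound⟩ :=
        exists_fat t₀ r.output w n' hout hbcw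
      have hlenb : r.output.length ≤ qb g := output_len_le hr
      have hboundq : bc t₀ w ≤ qb g * bc t₀ wm :=
        le_trans hbound (Nat.mul_le_mul_right _ hlenb)
      -- s must be a nonterminal
      obtain ⟨B₁, rfl⟩ : ∃ B₁, s = Symbol.nonterminal B₁ := by
        rcases s with t | B₁
        · exfalso
          have hmap : wm.map (Symbol.terminal : T → Symbol T g.NT) = [Symbol.terminal t] := by
            have h2 : DerIn g (([t] : List T).map Symbol.terminal)
                (wm.map Symbol.terminal) n'' := by simpa using hdm
            simpa using derIn_terminal h2
          have hlen1 : wm.length = 1 := by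
            have := congrArg List.length hmap; simpa using this
          have hble : bc t₀ wm ≤ 1 := by
            have := List.count_le_length (a := t₀) (l := wm)
            simp only [bc]; omega
          have : bc t₀ w ≤ qb g := by
            calc bc t₀ w ≤ qb g * bc t₀ wm := hboundq
            _ ≤ qb g * 1 := Nat.mul_le_mul_left _ hble
            _ = qb g := by omega
          omega
        · exact ⟨B₁, rfl⟩
      -- grounded context derivation
      have hctx : g.Derives [Symbol.nonterminal A]
          (w₁.map Symbol.terminal ++ [Symbol.nonterminal B₁] ++ w₂.map Symbol.terminal) := by
        have hstep : g.Derives [Symbol.nonterminal A] r.output := by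
          have := ContextFreeRule.Rewrites.input_output (r := r)
          rw [hrA] at this
          exact Relation.ReflTransGen.single ⟨r, hr, this⟩
        have h1 : g.Derives r.output
            (w₁.map Symbol.terminal ++ ([Symbol.nonterminal B₁] ++ post)) := by
          rw [hLeq]
          have := Derives.append_right hpre ([Symbol.nonterminal B₁] ++ post)
          simpa [List.append_assoc] using this
        have h2 : g.Derives
            (w₁.map Symbol.terminal ++ ([Symbol.nonterminal B₁] ++ post))
            (w₁.map Symbol.terminal ++ ([Symbol.nonterminal B₁] ++ w₂.map Symbol.terminal)) := by
          exact Derives.append_left (Derives.append_left hpost _) _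
        have := (hstep.trans h1).trans h2
        simpa [List.append_assoc] using this
      have hbcsplit : bc t₀ w = bc t₀ w₁ + bc t₀ wm + bc t₀ w₂ := by
        rw [hweq]; simp [bc, List.count_append]; omega
      by_cases h1 : B₁ ∈ V
      · exact .inr ⟨B₁, h1, w₁, wm, w₂, hweq, hctx, hdm.toDerives⟩
      · by_cases h2 : bc t₀ wm < bc t₀ w
        · -- push case
          have hAin : A ∈ inputsF g := hrA ▸ input_mem_inputsF hr
          have hV' : insert A V ⊆ inputsF g := Finset.insert_subset hAin hV
          have hcard' : (insert A V).card = V.card + 1 := Finset.card_insert_of_notMem hAV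
          have hthresh : qb g ^ ((inputsF g).card + 1 - (insert A V).card) < bc t₀ wm := by
            rw [hcard']
            have heq : (inputsF g).card + 1 - V.card = ((inputsF g).card - V.card) + 1 := by
              omega
            rw [heq] at hbig
            have : qb g ^ ((inputsF g).card - V.card) * qb g < qb g * bc t₀ wm := by
              calc qb g ^ ((inputsF g).card - V.card) * qb g
                  = qb g ^ (((inputsF g).card - V.card) + 1) := by ring
                _ < bc t₀ w := hbig
                _ ≤ qb g * bc t₀ wm := hboundq
            have := Nat.lt_of_mul_lt_mul_left (a := qb g) (by
              calc qb g * (qb g ^ ((inputsF g).card - V.card))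
                  = qb g ^ ((inputsF g).card - V.card) * qb g := by ring
                _ < qb g * bc t₀ wm := this)
            have heq2 : (inputsF g).card + 1 - (V.card + 1) = (inputsF g).card - V.card := by
              omega
            rw [heq2]
            exact this
          have hn''lt : n'' < n' + 1 := by omega
          rcases IH n'' hn''lt (insert A V) B₁ wm hdm hV' hthresh with hext | ⟨B, hBV', hrel⟩
          · -- lift ExtAbs
            left
            obtain ⟨B, u₁, x, z, y, u₂, hueq, hctx', hcyc, hz, hpos⟩ := hext
            refine ⟨B, w₁ ++ u₁, x, z, y, u₂ ++ w₂, ?_, ?_, hcyc, hz, hpos⟩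
            · rw [hweq, hueq]; simp [List.append_assoc]
            · have := (Derives.append_left (Derives.append_right hctx' (w₂.map Symbol.terminal))
                (w₁.map Symbol.terminal))
              have h3 := hctx.trans (by simpa [List.append_assoc] using this)
              simpa [List.append_assoc] using h3
          · by_cases hBA : B = A
            · -- convert to ExtAbs at A
              left
              rw [hBA] at hrel
              obtain ⟨x, z, y, hwmeq, hctxB, hzz⟩ := hrel
              have hcyc : g.Derives [Symbol.nonterminal A]
                  ((w₁ ++ x).map Symbol.terminal ++ [Symbol.nonterminal A]
                    ++ ((y ++ w₂).map Symbol.terminal)) := by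
                have := (Derives.append_left (Derives.append_right hctxB (w₂.map Symbol.terminal))
                  (w₁.map Symbol.terminal))
                have h3 := hctx.trans (by simpa [List.append_assoc] using this)
                simpa [List.append_assoc] using h3
              have hzbc : bc t₀ z ≤ bc t₀ wm := by
                rw [hwmeq]; simp [bc, List.count_append]; omega
              have hrefl : g.Derives [Symbol.nonterminal A]
                  (([] : List T).map Symbol.terminal ++ [Symbol.nonterminal A]
                    ++ ([] : List T).map Symbol.terminal) := by
                simpa using Derives.refl (g := g) [Symbol.nonterminal A]
              refine ⟨A, [], w₁ ++ x, z, y ++ w₂, [], ?_, hrefl, hcyc, hzz, ?_⟩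
              · rw [hweq, hwmeq]; simp [List.append_assoc]
              · have hxy : bc t₀ wm = bc t₀ x + bc t₀ z + bc t₀ y := by
                  rw [hwmeq]; simp [bc, List.count_append]; omega
                simp only [bc, List.count_append] at *
                omega
            · -- extend RelDec
              right
              have hBV : B ∈ V := by
                rcases Finset.mem_insert.mp hBV' with h | h
                · exact absurd h hBA
                · exact h
              obtain ⟨x, z, y, hwmeq, hctxB, hzz⟩ := hrel
              refine ⟨B, hBV, w₁ ++ x, z, y ++ w₂, ?_, ?_, hzz⟩
              · rw [hweq, hwmeq]; simp [List.append_assoc]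
              · have := (Derives.append_left (Derives.append_right hctxB (w₂.map Symbol.terminal))
                  (w₁.map Symbol.terminal))
                have h3 := hctx.trans (by simpa [List.append_assoc] using this)
                simpa [List.append_assoc] using h3
        · -- no-drop case: recurse with same V
          have hwm_ge : bc t₀ w ≤ bc t₀ wm := by omega
          have hthresh : qb g ^ ((inputsF g).card + 1 - V.card) < bc t₀ wm := by omega
          have hn''lt : n'' < n' + 1 := by omega
          rcases IH n'' hn''lt V B₁ wm hdm hV hthresh with hext | ⟨B, hBV, hrel⟩
          · left
            obtain ⟨B, u₁, x, z, y, u₂, hueq, hctx', hcyc, hz, hpos⟩ := hext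
            refine ⟨B, w₁ ++ u₁, x, z, y, u₂ ++ w₂, ?_, ?_, hcyc, hz, hpos⟩
            · rw [hweq, hueq]; simp [List.append_assoc]
            · have := (Derives.append_left (Derives.append_right hctx' (w₂.map Symbol.terminal))
                (w₁.map Symbol.terminal))
              have h3 := hctx.trans (by simpa [List.append_assoc] using this)
              simpa [List.append_assoc] using h3
          · right
            obtain ⟨x, z, y, hwmeq, hctxB, hzz⟩ := hrel
            refine ⟨B, hBV, w₁ ++ x, z, y ++ w₂, ?_, ?_, hzz⟩
            · rw [hweq, hwmeq]; simp [List.append_assoc]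
            · have := (Derives.append_left (Derives.append_right hctxB (w₂.map Symbol.terminal))
                (w₁.map Symbol.terminal))
              have h3 := hctx.trans (by simpa [List.append_assoc] using this)
              simpa [List.append_assoc] using h3


/-- a nonterminal with a productive self-embedding -/
def EmbedCyc (g : ContextFreeGrammar T) (t₀ : T) (B : g.NT) : Prop :=
  ∃ x y : List T,
    g.Derives [Symbol.nonterminal B]
      (x.map Symbol.terminal ++ [Symbol.nonterminal B] ++ y.map Symbol.terminal) ∧
    1 ≤ bc t₀ x + bc t₀ y

open Classical in
noncomputable def gain (g : ContextFreeGrammar T) (t₀ : T) (B : g.NT) : ℕ :=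
  if h : EmbedCyc g t₀ B then bc t₀ h.choose + bc t₀ h.choose_spec.choose else 1

lemma gain_pos (B : g.NT) : 1 ≤ gain g t₀ B := by
  unfold gain
  split
  · next h => exact h.choose_spec.choose_spec.2
  · exact le_refl 1

lemma gain_cycle {B : g.NT} (h : EmbedCyc g t₀ B) :
    ∃ x y : List T,
      g.Derives [Symbol.nonterminal B]
        (x.map Symbol.terminal ++ [Symbol.nonterminal B] ++ y.map Symbol.terminal) ∧
      bc t₀ x + bc t₀ y = gain g t₀ B := by
  refine ⟨h.choose, h.choose_spec.choose, h.choose_spec.choose_spec.1, ?_⟩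
  unfold gain
  rw [dif_pos h]

lemma cycle_iterate {B : g.NT} (h : EmbedCyc g t₀ B) (m : ℕ) :
    ∃ X Y : List T,
      g.Derives [Symbol.nonterminal B]
        (X.map Symbol.terminal ++ [Symbol.nonterminal B] ++ Y.map Symbol.terminal) ∧
      bc t₀ X + bc t₀ Y = m * gain g t₀ B := by
  obtain ⟨x, y, hc, hg⟩ := gain_cycle t₀ h
  induction m with
  | zero => exact ⟨[], [], by simpa using Derives.refl (g := g) [Symbol.nonterminal B], by simp [bc]⟩
  | succ m ih =>
      obtain ⟨X, Y, hd, hbc⟩ := ih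
      refine ⟨X ++ x, y ++ Y, ?_, ?_⟩
      · have hins : g.Derives
            (X.map Symbol.terminal ++ [Symbol.nonterminal B] ++ Y.map Symbol.terminal)
            (X.map Symbol.terminal ++
              (x.map Symbol.terminal ++ [Symbol.nonterminal B] ++ y.map Symbol.terminal)
              ++ Y.map Symbol.terminal) := by
          exact Derives.append_right (Derives.append_left hc _) _
        have := hd.trans hins
        simpa [List.append_assoc] using this
      · have hring : (m + 1) * gain g t₀ B = m * gain g t₀ B + gain g t₀ B := by ring
        simp [bc, List.count_append] at *
        omega

open Classical in
noncomputable def bigT (g : ContextFreeGrammar T) (t₀ : T) : ℕ :=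
  ∏ B ∈ (inputsF g).filter (fun B => EmbedCyc g t₀ B), gain g t₀ B

lemma bigT_pos : 1 ≤ bigT g t₀ := by
  classical
  unfold bigT
  exact Finset.one_le_prod' (fun B _ => gain_pos t₀ B)

lemma mem_bigNT {A : g.NT} {w : List T} (h : g.Derives [Symbol.nonterminal A]
    (w.map Symbol.terminal)) : A ∈ inputsF g := by
  obtain ⟨n, hn⟩ := derives_derIn h
  obtain ⟨r, hr, hrA, -⟩ := derIn_nt_head hn
  exact hrA ▸ input_mem_inputsF hr

lemma pump_up {w : List T} (hw : w ∈ g.language)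
    (hbig : qb g ^ ((inputsF g).card + 1) < bc t₀ w) :
    ∃ w' ∈ g.language, bc t₀ w' = bc t₀ w + bigT g t₀ := by
  classical
  obtain ⟨n, hn⟩ := derives_derIn ((mem_language_iff g w).mp hw)
  have hcore := core t₀ n ∅ g.initial w hn (Finset.empty_subset _) (by simpa using hbig)
  rcases hcore with hext | ⟨B, hB, -⟩
  swap
  · exact absurd hB (by simp)
  obtain ⟨B, w₁, x, z, y, w₂, hweq, hctx, hcyc, hz, hpos⟩ := hext
  have hemb : EmbedCyc g t₀ B := ⟨x, y, hcyc, hpos⟩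
  have hBin : B ∈ inputsF g := mem_bigNT hz
  have hBf : B ∈ (inputsF g).filter (fun B => EmbedCyc g t₀ B) := by
    simp [Finset.mem_filter, hBin, hemb]
  have hdvd : gain g t₀ B ∣ bigT g t₀ := Finset.dvd_prod_of_mem _ hBf
  obtain ⟨X, Y, hXY, hXYbc⟩ := cycle_iterate t₀ hemb (bigT g t₀ / gain g t₀ B)
  have hXYtot : bc t₀ X + bc t₀ Y = bigT g t₀ := by
    rw [hXYbc, Nat.div_mul_cancel hdvd]
  refine ⟨w₁ ++ x ++ X ++ z ++ Y ++ y ++ w₂, ?_, ?_⟩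
  · rw [mem_language_iff]
    -- [nt initial] ⇒* w₁ [B] w₂ ⇒* w₁ x [B] y w₂ ⇒* w₁ x X [B] Y y w₂ ⇒* full word
    have s1 : g.Derives [Symbol.nonterminal g.initial]
        (w₁.map Symbol.terminal ++ [Symbol.nonterminal B] ++ w₂.map Symbol.terminal) := hctx
    have s2 : g.Derives
        (w₁.map Symbol.terminal ++ [Symbol.nonterminal B] ++ w₂.map Symbol.terminal)
        (w₁.map Symbol.terminal ++
          (x.map Symbol.terminal ++ [Symbol.nonterminal B] ++ y.map Symbol.terminal)
          ++ w₂.map Symbol.terminal) :=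
      Derives.append_right (Derives.append_left hcyc _) _
    have s3 : g.Derives
        (w₁.map Symbol.terminal ++
          (x.map Symbol.terminal ++ [Symbol.nonterminal B] ++ y.map Symbol.terminal)
          ++ w₂.map Symbol.terminal)
        (w₁.map Symbol.terminal ++
          (x.map Symbol.terminal ++
            (X.map Symbol.terminal ++ [Symbol.nonterminal B] ++ Y.map Symbol.terminal)
            ++ y.map Symbol.terminal)
          ++ w₂.map Symbol.terminal) := by
      refine Derives.append_right (Derives.append_left ?_ _) _
      exact Derives.append_right (Derives.append_left hXY _) _
    have s4 : g.Derives
        (w₁.map Symbol.terminal ++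
          (x.map Symbol.terminal ++
            (X.map Symbol.terminal ++ [Symbol.nonterminal B] ++ Y.map Symbol.terminal)
            ++ y.map Symbol.terminal)
          ++ w₂.map Symbol.terminal)
        (w₁.map Symbol.terminal ++
          (x.map Symbol.terminal ++
            (X.map Symbol.terminal ++ z.map Symbol.terminal ++ Y.map Symbol.terminal)
            ++ y.map Symbol.terminal)
          ++ w₂.map Symbol.terminal) := by
      refine Derives.append_right (Derives.append_left ?_ _) _
      refine Derives.append_right (Derives.append_left ?_ _) _
      exact Derives.append_right (Derives.append_left hz _) _
    have := ((s1.trans s2).trans s3).trans s4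
    simpa [List.append_assoc] using this
  · subst hweq
    simp [bc, List.count_append] at *
    omega


lemma up_to_periodic (S : Set ℕ) (Θ TT : ℕ) (hT : 1 ≤ TT)
    (h : ∀ n ∈ S, Θ < n → n + TT ∈ S) :
    ∃ M, ∀ n, M ≤ n → (n ∈ S ↔ n + TT ∈ S) := by
  classical
  set P : ℕ → Prop := fun r => ∃ m, m ∈ S ∧ Θ < m ∧ m % TT = r with hP
  refine ⟨Θ + 1 + TT + (Finset.range TT).sup (fun r => if hr : P r then Nat.find hr else 0),
    fun n hn => ?_⟩
  constructor
  · intro hnS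
    exact h n hnS (by omega)
  · intro hnT
    have hex : P (n % TT) := ⟨n + TT, hnT, by omega, Nat.add_mod_right n TT⟩
    have hmem : n % TT ∈ Finset.range TT := Finset.mem_range.mpr (Nat.mod_lt _ (by omega))
    have hsup : (if hr : P (n % TT) then Nat.find hr else 0) ≤
        (Finset.range TT).sup (fun r => if hr : P r then Nat.find hr else 0) :=
      Finset.le_sup (f := fun r => if hr : P r then Nat.find hr else 0) hmem
    rw [dif_pos hex] at hsup
    set m := Nat.find hex with hm
    obtain ⟨hmS, hmΘ, hmr⟩ := Nat.find_spec hex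
    have hmn : m ≤ n := by omega
    have hmod : m % TT = n % TT := hmr
    have hdvd : TT ∣ n - m := by
      have : m ≡ n [MOD TT] := by
        unfold Nat.ModEq
        omega
      exact (Nat.modEq_iff_dvd' hmn).mp this
    obtain ⟨k, hk⟩ := hdvd
    have hchain : ∀ j, m + TT * j ∈ S := by
      intro j
      induction j with
      | zero => simpa using hmS
      | succ j ih =>
          have := h (m + TT * j) ih (by omega)
          have heq : m + TT * j + TT = m + TT * (j + 1) := by ring
          rwa [heq] at this
      
    have : n = m + TT * k := by omega
    rw [this]
    exact hchain k

/-- the set of `t₀`-counts of a context-free language is eventually periodic -/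
theorem cf_bcount_periodic (L : Language T) (h : L.IsContextFree) :
    ∃ M TT : ℕ, 1 ≤ TT ∧ ∀ n, M ≤ n →
      ((∃ w ∈ L, bc t₀ w = n) ↔ (∃ w ∈ L, bc t₀ w = n + TT)) := by
  obtain ⟨g, rfl⟩ := h
  set S : Set ℕ := {n | ∃ w ∈ g.language, bc t₀ w = n} with hS
  have hup : ∀ n ∈ S, qb g ^ ((inputsF g).card + 1) < n → n + bigT g t₀ ∈ S := by
    rintro n ⟨w, hw, rfl⟩ hbig
    obtain ⟨w', hw', hbc⟩ := pump_up t₀ hw hbig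
    exact ⟨w', hw', hbc⟩
  obtain ⟨M, hM⟩ := up_to_periodic S (qb g ^ ((inputsF g).card + 1)) (bigT g t₀)
    (bigT_pos t₀) hup
  exact ⟨M, bigT g t₀, bigT_pos t₀, fun n hn => hM n hn⟩

/-- iterated periodicity -/
lemma periodic_iterate {L : Language T} {M TT : ℕ}
    (hper : ∀ n, M ≤ n → ((∃ w ∈ L, bc t₀ w = n) ↔ (∃ w ∈ L, bc t₀ w = n + TT))) :
    ∀ k n, M ≤ n → ((∃ w ∈ L, bc t₀ w = n) ↔ (∃ w ∈ L, bc t₀ w = n + TT * k)) := by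
  intro k
  induction k with
  | zero => intro n hn; simp
  | succ k ih =>
      intro n hn
      have h1 := ih n hn
      have h2 := hper (n + TT * k) (by omega)
      have heq : n + TT * k + TT = n + TT * (k + 1) := by ring
      rw [heq] at h2
      exact h1.trans h2

/-- common threshold and period for a finite family of context-free languages -/
theorem finset_cf_periodic (C : Finset (Language T))
    (hcf : ∀ L ∈ C, Language.IsContextFree L) :
    ∃ Mstar Tstar : ℕ, 1 ≤ Mstar ∧ 1 ≤ Tstar ∧ ∀ L ∈ C, ∀ n, Mstar ≤ n →
      ((∃ w ∈ L, bc t₀ w = n) ↔ (∃ w ∈ L, bc t₀ w = n + Tstar)) := by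
  classical
  have hh : ∀ L : {x // x ∈ C}, ∃ p : ℕ × ℕ, 1 ≤ p.2 ∧ ∀ n, p.1 ≤ n →
      ((∃ w ∈ L.1, bc t₀ w = n) ↔ (∃ w ∈ L.1, bc t₀ w = n + p.2)) := by
    rintro ⟨L, hL⟩
    obtain ⟨M, TT, h1, h2⟩ := cf_bcount_periodic t₀ L (hcf L hL)
    exact ⟨(M, TT), h1, h2⟩
  choose f hf1 hf2 using hh
  refine ⟨1 + C.attach.sup (fun x => (f x).1), ∏ x ∈ C.attach, (f x).2, by omega, ?_, ?_⟩
  · exact Finset.one_le_prod' (fun x _ => hf1 x)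
  · intro L hL n hn
    set x : {y // y ∈ C} := ⟨L, hL⟩ with hx
    have hdvd : (f x).2 ∣ ∏ y ∈ C.attach, (f y).2 :=
      Finset.dvd_prod_of_mem _ (Finset.mem_attach _ _)
    obtain ⟨k, hk⟩ := hdvd
    have hM : (f x).1 ≤ n := by
      have : (f x).1 ≤ C.attach.sup (fun y => (f y).1) :=
        Finset.le_sup (f := fun y => (f y).1) (Finset.mem_attach _ _)
      omega
    have := periodic_iterate t₀ (hf2 x) k n hM
    rwa [← hk] at this

end CFPump



namespace DiaBox
open CFPump

lemma path_nil {α P : Type} {T : LTS α P} {s t : T.S} : T.Path s [] t ↔ t = s := by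
  constructor
  · intro h; cases h; rfl
  · rintro rfl; exact .refl _

lemma path_cons {α P : Type} {T : LTS α P} {s t : T.S} {x : α} {w : List α} :
    T.Path s (x :: w) t ↔ ∃ s', T.trans s x s' ∧ T.Path s' w t := by
  constructor
  · intro h; cases h with | step h1 h2 => exact ⟨_, h1, h2⟩
  · rintro ⟨s', h1, h2⟩; exact .step h1 h2

/-- bisimulations between LTSs -/
structure IsBisim (T₁ T₂ : LTS AB Unit) (R : T₁.S → T₂.S → Prop) : Prop where
  label : ∀ s t, R s t → (T₁.label s () ↔ T₂.label t ())
  zig : ∀ s t x s', R s t → T₁.trans s x s' → ∃ t', T₂.trans t x t' ∧ R s' t'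
  zag : ∀ s t x t', R s t → T₂.trans t x t' → ∃ s', T₁.trans s x s' ∧ R s' t'

lemma bisim_path_zig {T₁ T₂ R} (hb : IsBisim T₁ T₂ R) {s t w s'}
    (hR : R s t) (hp : T₁.Path s w s') : ∃ t', T₂.Path t w t' ∧ R s' t' := by
  induction hp generalizing t with
  | refl s => exact ⟨t, .refl t, hR⟩
  | step h1 h2 ih =>
      obtain ⟨t', ht', hR'⟩ := hb.zig _ _ _ _ hR h1
      obtain ⟨t'', ht'', hR''⟩ := ih hR'
      exact ⟨t'', .step ht' ht'', hR''⟩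

lemma bisim_path_zag {T₁ T₂ R} (hb : IsBisim T₁ T₂ R) {s t w t'}
    (hR : R s t) (hp : T₂.Path t w t') : ∃ s', T₁.Path s w s' ∧ R s' t' := by
  induction hp generalizing s with
  | refl t => exact ⟨s, .refl s, hR⟩
  | step h1 h2 ih =>
      obtain ⟨s', hs', hR'⟩ := hb.zag _ _ _ _ hR h1
      obtain ⟨s'', hs'', hR''⟩ := ih hR'
      exact ⟨s'', .step hs' hs'', hR''⟩

lemma bisim_sat {T₁ T₂ R} (hb : IsBisim T₁ T₂ R) (φ : PDLFormula AB Unit) :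
    ∀ {s t}, R s t → (Sat T₁ s φ ↔ Sat T₂ t φ) := by
  induction φ with
  | atom p => intro s t hR; cases p; exact hb.label s t hR
  | neg ψ ih => intro s t hR; exact not_congr (ih hR)
  | or ψ χ ih1 ih2 => intro s t hR; exact or_congr (ih1 hR) (ih2 hR)
  | and ψ χ ih1 ih2 => intro s t hR; exact and_congr (ih1 hR) (ih2 hR)
  | dia L ψ ih =>
      intro s t hR
      constructor
      · rintro ⟨w, u, hw, hp, hs⟩
        obtain ⟨u', hp', hR'⟩ := bisim_path_zig hb hR hp
        exact ⟨w, u', hw, hp', (ih hR').mp hs⟩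
      · rintro ⟨w, u', hw, hp', hs⟩
        obtain ⟨u, hp, hR'⟩ := bisim_path_zag hb hR hp'
        exact ⟨w, u, hw, hp, (ih hR').mpr hs⟩
  | box L ψ ih =>
      intro s t hR
      constructor
      · intro h w u' hw hp'
        obtain ⟨u, hp, hR'⟩ := bisim_path_zag hb hR hp'
        exact (ih hR').mp (h w u hw hp)
      · intro h w u hw hp
        obtain ⟨u', hp', hR'⟩ := bisim_path_zig hb hR hp
        exact (ih hR').mpr (h w u' hw hp')

/-! ### bouquet structures -/

variable (k PP : ℕ)

def capIdx (hP : 0 < PP) (m : ℕ) : Fin PP := ⟨min m (PP - 1), by omega⟩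

def bouquet (spots : Fin k → ℕ) (hP : 0 < PP) : LTS AB Unit where
  S := Option (Fin k × Fin PP)
  trans s x t :=
    match x with
    | AB.a => t = s
    | AB.b =>
        match s with
        | none => ∃ i, t = some (i, capIdx PP hP 0)
        | some (i, j) => t = some (i, capIdx PP hP (j.val + 1))
  label s _ := ∃ i j, s = some (i, j) ∧ j.val + 1 = spots i

instance (spots : Fin k → ℕ) (hP : 0 < PP) : Finite (bouquet k PP spots hP).S := by
  unfold bouquet
  infer_instance

variable {k PP}

/-- the state at depth `n ≥ 1` in thread `i` -/
def stPos (hP : 0 < PP) (i : Fin k) (n : ℕ) : (Option (Fin k × Fin PP)) :=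
  some (i, capIdx PP hP (n - 1))

lemma capIdx_add (hP : 0 < PP) (a m : ℕ) :
    capIdx PP hP (min a (PP - 1) + m) = capIdx PP hP (a + m) := by
  unfold capIdx
  ext
  simp
  omega

lemma bc_cons_a (w : List AB) : bc AB.b (AB.a :: w) = bc AB.b w := by
  simp [bc, List.count_cons]

lemma bc_cons_b (w : List AB) : bc AB.b (AB.b :: w) = bc AB.b w + 1 := by
  simp [bc, List.count_cons]

lemma stPos_path {spots : Fin k → ℕ} {hP : 0 < PP} {i : Fin k} {n : ℕ} (hn : 1 ≤ n)
    {w : List AB} {t : (bouquet k PP spots hP).S} :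
    (bouquet k PP spots hP).Path (stPos hP i n) w t ↔ t = stPos hP i (n + bc AB.b w) := by
  induction w generalizing n with
  | nil =>
      erw [path_nil]
      have : bc AB.b ([] : List AB) = 0 := by simp [bc]
      rw [this]
      constructor
      · rintro rfl; rfl
      · rintro rfl; rfl
  | cons x w ih =>
      erw [path_cons]
      cases x with
      | a =>
          rw [bc_cons_a]
          constructor
          · rintro ⟨s', hs', hp⟩
            have : s' = stPos hP i n := hs'
            rw [this] at hp
            exact (ih hn).mp hp
          · intro ht
            exact ⟨stPos hP i n, rfl, (ih hn).mpr ht⟩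
      | b =>
          rw [bc_cons_b]
          have hstep : ∀ s' : (bouquet k PP spots hP).S,
              (bouquet k PP spots hP).trans (stPos hP i n) AB.b s' ↔
                s' = stPos hP i (n + 1) := by
            intro s'
            show s' = some (i, capIdx PP hP ((capIdx PP hP (n-1)).val + 1)) ↔ _
            unfold stPos
            constructor
            · rintro rfl
              congr 1
              ext : 1
              · rfl
              · show capIdx PP hP ((capIdx PP hP (n-1)).val + 1) = capIdx PP hP (n + 1 - 1)
                unfold capIdx
                ext
                simp
                omega
            · rintro rfl
              congr 2
              unfold capIdx
              ext
              simp
              omega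
          constructor
          · rintro ⟨s', hs', hp⟩
            rw [hstep s'] at hs'
            rw [hs'] at hp
            have := (ih (by omega)).mp hp
            rw [this]
            congr 1
            omega
          · intro ht
            refine ⟨stPos hP i (n + 1), (hstep _).mpr rfl, ?_⟩
            refine (ih (by omega)).mpr ?_
            rw [ht]
            congr 1
            omega

lemma root_path {spots : Fin k → ℕ} {hP : 0 < PP}
    {w : List AB} {t : (bouquet k PP spots hP).S} :
    (bouquet k PP spots hP).Path none w t ↔
      ((bc AB.b w = 0 ∧ t = none) ∨ (1 ≤ bc AB.b w ∧ ∃ i, t = stPos hP i (bc AB.b w))) := by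
  induction w with
  | nil =>
      erw [path_nil]
      have : bc AB.b ([] : List AB) = 0 := by simp [bc]
      rw [this]
      constructor
      · rintro rfl; exact .inl ⟨rfl, rfl⟩
      · rintro (⟨-, rfl⟩ | ⟨h, -⟩)
        · rfl
        · omega
  | cons x w ih =>
      erw [path_cons]
      cases x with
      | a =>
          rw [bc_cons_a]
          constructor
          · rintro ⟨s', hs', hp⟩
            have : s' = none := hs'
            rw [this] at hp
            exact ih.mp hp
          · intro ht
            exact ⟨none, rfl, ih.mpr ht⟩
      | b =>
          rw [bc_cons_b]
          constructor
          · rintro ⟨s', hs', hp⟩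
            obtain ⟨i, hi⟩ := hs'
            rw [hi] at hp
            have : s' = s' := rfl
            have hp' : (bouquet k PP spots hP).Path (stPos hP i 1) w t := by
              have : (some (i, capIdx PP hP 0) : (bouquet k PP spots hP).S)
                  = stPos hP i 1 := by
                unfold stPos; rfl
              rwa [this] at hp
            have := (stPos_path (le_refl 1)).mp hp'
            refine .inr ⟨by omega, i, ?_⟩
            rw [this]
            congr 1
            omega
          · rintro (⟨h0, -⟩ | ⟨-, i, hi⟩)
            · omega
            · refine ⟨stPos hP i 1, ⟨i, rfl⟩, ?_⟩
              refine (stPos_path (le_refl 1)).mpr ?_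
              rw [hi]
              congr 1
              omega

lemma bouquet_label {spots : Fin k → ℕ} {hP : 0 < PP} {i : Fin k} {n : ℕ} :
    (bouquet k PP spots hP).label (stPos hP i n) () ↔ min (n - 1) (PP - 1) + 1 = spots i := by
  show (∃ i' j, (stPos hP i n : Option (Fin k × Fin PP)) = some (i', j) ∧ j.val + 1 = spots i') ↔ _
  constructor
  · rintro ⟨i', j, hij, hspot⟩
    unfold stPos at hij
    have h := Option.some.inj hij
    have hi : i = i' := congrArg Prod.fst h
    have hj : capIdx PP hP (n - 1) = j := congrArg Prod.snd h
    subst hi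
    subst hj
    simpa [capIdx] using hspot
  · intro h
    exact ⟨i, capIdx PP hP (n - 1), rfl, by simpa [capIdx] using h⟩

lemma root_not_label {spots : Fin k → ℕ} {hP : 0 < PP} :
    ¬ (bouquet k PP spots hP).label none () := by
  rintro ⟨i, j, h, -⟩
  cases h


/-! ### the two structures -/

def Mu (Ms Ts x : ℕ) : ℕ := (x + 1) * (Ms + Ts) + 1

def n0 (Ms Ts dd : ℕ) : ℕ := Ms + 2 * Ts + Mu Ms Ts dd + 1

def n0' (Ms Ts dd : ℕ) : ℕ := n0 Ms Ts dd + Ts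

def PB (Ms Ts dd : ℕ) : ℕ := n0' Ms Ts dd + 1

lemma PB_pos (Ms Ts dd : ℕ) : 0 < PB Ms Ts dd := by unfold PB; omega

def spots2 (Ms Ts dd : ℕ) : Fin 2 → ℕ := fun i => if i.val = 0 then n0 Ms Ts dd else n0' Ms Ts dd

def T1 (Ms Ts dd : ℕ) : LTS AB Unit :=
  bouquet 1 (PB Ms Ts dd) (fun _ => n0 Ms Ts dd) (PB_pos Ms Ts dd)

def T2 (Ms Ts dd : ℕ) : LTS AB Unit :=
  bouquet 2 (PB Ms Ts dd) (spots2 Ms Ts dd) (PB_pos Ms Ts dd)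

lemma Mu_succ (Ms Ts x : ℕ) : Mu Ms Ts (x + 1) = Mu Ms Ts x + (Ms + Ts) := by unfold Mu; ring

lemma Mu_mono (Ms Ts : ℕ) {x y : ℕ} (h : x ≤ y) : Mu Ms Ts x ≤ Mu Ms Ts y := by
  unfold Mu
  have := Nat.mul_le_mul_right (Ms + Ts) (Nat.add_le_add_right h 1)
  omega

lemma Mu_pos (Ms Ts x : ℕ) : 1 ≤ Mu Ms Ts x := by unfold Mu; omega

section Params

variable (Ms Ts dd : ℕ)

/-- bisimulation between the single thread of `T1` and thread 0 of `T2` -/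
def R1 : (T1 Ms Ts dd).S → (T2 Ms Ts dd).S → Prop :=
  fun s t => ∃ j : Fin (PB Ms Ts dd), s = some (0, j) ∧ t = some (0, j)

lemma R1_bisim : IsBisim (T1 Ms Ts dd) (T2 Ms Ts dd) (R1 Ms Ts dd) := by
  constructor
  · rintro s t ⟨j, rfl, rfl⟩
    show (∃ i' j', _ ∧ _) ↔ (∃ i' j', _ ∧ _)
    constructor
    · rintro ⟨i', j', hj, hs⟩
      have h := Option.some.inj hj
      have hj' : j = j' := congrArg Prod.snd h
      subst hj'
      exact ⟨0, j, rfl, by simpa [spots2] using hs⟩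
    · rintro ⟨i', j', hj, hs⟩
      have h := Option.some.inj hj
      have hi : (0 : Fin 2) = i' := congrArg Prod.fst h
      have hj' : j = j' := congrArg Prod.snd h
      subst hj'
      subst hi
      exact ⟨0, j, rfl, by simpa [spots2] using hs⟩
  · rintro s t x s' ⟨j, rfl, rfl⟩ htr
    cases x with
    | a => exact ⟨some (0, j), rfl, ⟨j, htr ▸ rfl, rfl⟩⟩
    | b =>
        have : s' = some (0, capIdx _ (PB_pos Ms Ts dd) (j.val + 1)) := htr
        subst this
        exact ⟨some (0, capIdx _ (PB_pos Ms Ts dd) (j.val + 1)), rfl, ⟨_, rfl, rfl⟩⟩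
  · rintro s t x t' ⟨j, rfl, rfl⟩ htr
    cases x with
    | a => exact ⟨some (0, j), rfl, ⟨j, rfl, htr ▸ rfl⟩⟩
    | b =>
        have : t' = some (0, capIdx _ (PB_pos Ms Ts dd) (j.val + 1)) := htr
        subst this
        exact ⟨some (0, capIdx _ (PB_pos Ms Ts dd) (j.val + 1)), rfl, ⟨_, rfl, rfl⟩⟩

/-- internal bisimulation of `T2`: thread 1 shifted by `Ts` matches thread 0 -/
def R2 : (T2 Ms Ts dd).S → (T2 Ms Ts dd).S → Prop :=
  fun s t =>
    (∃ m : ℕ, m + Ts ≤ n0' Ms Ts dd - 1 ∧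
      s = some (1, capIdx _ (PB_pos Ms Ts dd) (m + Ts)) ∧
      t = some (0, capIdx _ (PB_pos Ms Ts dd) m)) ∨
    (s = some (1, capIdx _ (PB_pos Ms Ts dd) (PB Ms Ts dd - 1)) ∧
      ∃ m : ℕ, n0 Ms Ts dd ≤ m ∧ t = some (0, capIdx _ (PB_pos Ms Ts dd) m))

lemma R2_bisim (hTs : 1 ≤ Ts) : IsBisim (T2 Ms Ts dd) (T2 Ms Ts dd) (R2 Ms Ts dd) := by
  have hPB : PB Ms Ts dd = n0' Ms Ts dd + 1 := rfl
  have hn0' : n0' Ms Ts dd = n0 Ms Ts dd + Ts := rfl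
  have hn0 : 1 ≤ n0 Ms Ts dd := by unfold n0; omega
  constructor
  · rintro s t (⟨m, hm, rfl, rfl⟩ | ⟨rfl, m, hm, rfl⟩)
    · show (∃ i' j', _ ∧ _) ↔ (∃ i' j', _ ∧ _)
      constructor
      · rintro ⟨i', j', hj, hs⟩
        have h := Option.some.inj hj
        have hi : (1 : Fin 2) = i' := congrArg Prod.fst h
        have hj' : capIdx _ (PB_pos Ms Ts dd) (m + Ts) = j' := congrArg Prod.snd h
        subst hi; subst hj'
        simp only [spots2, capIdx] at hs ⊢
        refine ⟨0, capIdx _ (PB_pos Ms Ts dd) m, rfl, ?_⟩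
        simp only [capIdx]
        simp at hs ⊢
        omega
      · rintro ⟨i', j', hj, hs⟩
        have h := Option.some.inj hj
        have hi : (0 : Fin 2) = i' := congrArg Prod.fst h
        have hj' : capIdx _ (PB_pos Ms Ts dd) m = j' := congrArg Prod.snd h
        subst hi; subst hj'
        simp only [spots2, capIdx] at hs ⊢
        refine ⟨1, capIdx _ (PB_pos Ms Ts dd) (m + Ts), rfl, ?_⟩
        simp only [capIdx]
        simp at hs ⊢
        omega
    · show (∃ i' j', _ ∧ _) ↔ (∃ i' j', _ ∧ _)
      constructor
      · rintro ⟨i', j', hj, hs⟩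
        have h := Option.some.inj hj
        have hi : (1 : Fin 2) = i' := congrArg Prod.fst h
        have hj' : capIdx _ (PB_pos Ms Ts dd) (PB Ms Ts dd - 1) = j' := congrArg Prod.snd h
        subst hi; subst hj'
        exfalso
        simp only [spots2, capIdx] at hs
        simp at hs
        omega
      · rintro ⟨i', j', hj, hs⟩
        have h := Option.some.inj hj
        have hi : (0 : Fin 2) = i' := congrArg Prod.fst h
        have hj' : capIdx _ (PB_pos Ms Ts dd) m = j' := congrArg Prod.snd h
        subst hi; subst hj'
        exfalso
        simp only [spots2, capIdx] at hs
        simp at hs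
        omega
  · rintro s t x s' (⟨m, hm, rfl, rfl⟩ | ⟨rfl, m, hm, rfl⟩) htr
    · cases x with
      | a =>
          refine ⟨some (0, capIdx _ (PB_pos Ms Ts dd) m), rfl, ?_⟩
          have : s' = some (1, capIdx _ (PB_pos Ms Ts dd) (m + Ts)) := htr
          subst this
          exact .inl ⟨m, hm, rfl, rfl⟩
      | b =>
          have hs' : s' = some (1, capIdx _ (PB_pos Ms Ts dd) ((capIdx _ (PB_pos Ms Ts dd) (m + Ts)).val + 1)) := htr
          refine ⟨some (0, capIdx _ (PB_pos Ms Ts dd) ((capIdx _ (PB_pos Ms Ts dd) m).val + 1)), rfl, ?_⟩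
          subst hs'
          have he1 : ((capIdx _ (PB_pos Ms Ts dd) (m + Ts)).val + 1) = m + Ts + 1 := by
            simp [capIdx]; omega
          have he2 : ((capIdx _ (PB_pos Ms Ts dd) m).val + 1) = m + 1 := by
            simp [capIdx]; omega
          rw [he1, he2]
          by_cases hend : m + 1 + Ts ≤ n0' Ms Ts dd - 1
          · exact .inl ⟨m + 1, hend, by rw [show m + Ts + 1 = m + 1 + Ts by omega], rfl⟩
          · refine .inr ⟨?_, m + 1, by omega, rfl⟩
            congr 1
            ext : 1
            · rfl
            · show capIdx _ (PB_pos Ms Ts dd) (m + Ts + 1) = capIdx _ (PB_pos Ms Ts dd) (PB Ms Ts dd - 1)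
              simp [capIdx]
              omega
    · cases x with
      | a =>
          refine ⟨some (0, capIdx _ (PB_pos Ms Ts dd) m), rfl, ?_⟩
          have : s' = some (1, capIdx _ (PB_pos Ms Ts dd) (PB Ms Ts dd - 1)) := htr
          subst this
          exact .inr ⟨rfl, m, hm, rfl⟩
      | b =>
          have hs' : s' = some (1, capIdx _ (PB_pos Ms Ts dd) ((capIdx _ (PB_pos Ms Ts dd) (PB Ms Ts dd - 1)).val + 1)) := htr
          refine ⟨some (0, capIdx _ (PB_pos Ms Ts dd) ((capIdx _ (PB_pos Ms Ts dd) m).val + 1)), rfl, ?_⟩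
          subst hs'
          refine .inr ⟨?_, m + 1, by omega, ?_⟩
          · congr 1
            ext : 1
            · rfl
            · show capIdx _ (PB_pos Ms Ts dd) ((capIdx _ (PB_pos Ms Ts dd) (PB Ms Ts dd - 1)).val + 1) = capIdx _ (PB_pos Ms Ts dd) (PB Ms Ts dd - 1)
              simp [capIdx]
          · congr 2
            simp [capIdx]
            omega
  · rintro s t x t' (⟨m, hm, rfl, rfl⟩ | ⟨rfl, m, hm, rfl⟩) htr
    · cases x with
      | a =>
          refine ⟨some (1, capIdx _ (PB_pos Ms Ts dd) (m + Ts)), rfl, ?_⟩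
          have : t' = some (0, capIdx _ (PB_pos Ms Ts dd) m) := htr
          subst this
          exact .inl ⟨m, hm, rfl, rfl⟩
      | b =>
          have ht' : t' = some (0, capIdx _ (PB_pos Ms Ts dd) ((capIdx _ (PB_pos Ms Ts dd) m).val + 1)) := htr
          refine ⟨some (1, capIdx _ (PB_pos Ms Ts dd) ((capIdx _ (PB_pos Ms Ts dd) (m + Ts)).val + 1)), rfl, ?_⟩
          subst ht'
          have he1 : ((capIdx _ (PB_pos Ms Ts dd) (m + Ts)).val + 1) = m + Ts + 1 := by
            simp [capIdx]; omega
          have he2 : ((capIdx _ (PB_pos Ms Ts dd) m).val + 1) = m + 1 := by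
            simp [capIdx]; omega
          rw [he1, he2]
          by_cases hend : m + 1 + Ts ≤ n0' Ms Ts dd - 1
          · exact .inl ⟨m + 1, hend, by rw [show m + Ts + 1 = m + 1 + Ts by omega], rfl⟩
          · refine .inr ⟨?_, m + 1, by omega, rfl⟩
            congr 1
            ext : 1
            · rfl
            · show capIdx _ (PB_pos Ms Ts dd) (m + Ts + 1) = capIdx _ (PB_pos Ms Ts dd) (PB Ms Ts dd - 1)
              simp [capIdx]
              omega
    · cases x with
      | a =>
          refine ⟨some (1, capIdx _ (PB_pos Ms Ts dd) (PB Ms Ts dd - 1)), rfl, ?_⟩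
          have : t' = some (0, capIdx _ (PB_pos Ms Ts dd) m) := htr
          subst this
          exact .inr ⟨rfl, m, hm, rfl⟩
      | b =>
          have ht' : t' = some (0, capIdx _ (PB_pos Ms Ts dd) ((capIdx _ (PB_pos Ms Ts dd) m).val + 1)) := htr
          refine ⟨some (1, capIdx _ (PB_pos Ms Ts dd) ((capIdx _ (PB_pos Ms Ts dd) (PB Ms Ts dd - 1)).val + 1)), rfl, ?_⟩
          subst ht'
          refine .inr ⟨?_, m + 1, by omega, ?_⟩
          · congr 1
            ext : 1
            · rfl
            · show capIdx _ (PB_pos Ms Ts dd) ((capIdx _ (PB_pos Ms Ts dd) (PB Ms Ts dd - 1)).val + 1) = capIdx _ (PB_pos Ms Ts dd) (PB Ms Ts dd - 1)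
              simp [capIdx]
          · congr 2
            simp [capIdx]
            omega


lemma sat_dia {TT : LTS AB Unit} {s : TT.S} {L : Language AB} {ψ : PDLFormula AB Unit} :
    Sat TT s (.dia L ψ) ↔ ∃ w t, w ∈ L ∧ TT.Path s w t ∧ Sat TT t ψ := Iff.rfl

lemma sat_box {TT : LTS AB Unit} {s : TT.S} {L : Language AB} {ψ : PDLFormula AB Unit} :
    Sat TT s (.box L ψ) ↔ ∀ w t, w ∈ L → TT.Path s w t → Sat TT t ψ := Iff.rfl

/-- transfer between `T1`'s thread and `T2`'s thread 0 -/
lemma transfer01 (ψ : PDLFormula AB Unit) (n : ℕ) :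
    Sat (T1 Ms Ts dd) (stPos (PB_pos Ms Ts dd) 0 n) ψ ↔
      Sat (T2 Ms Ts dd) (stPos (PB_pos Ms Ts dd) 0 n) ψ :=
  bisim_sat (R1_bisim Ms Ts dd) ψ ⟨capIdx _ (PB_pos Ms Ts dd) (n - 1), rfl, rfl⟩

/-- transfer along the internal shift bisimulation, pre-spot zone -/
lemma transfer_pre (hTs : 1 ≤ Ts) (ψ : PDLFormula AB Unit) {n : ℕ}
    (h1 : Ts + 1 ≤ n) (h2 : n ≤ n0' Ms Ts dd) :
    Sat (T2 Ms Ts dd) (stPos (PB_pos Ms Ts dd) 1 n) ψ ↔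
      Sat (T2 Ms Ts dd) (stPos (PB_pos Ms Ts dd) 0 (n - Ts)) ψ := by
  refine bisim_sat (R2_bisim Ms Ts dd hTs) ψ (.inl ⟨n - Ts - 1, by omega, ?_, ?_⟩)
  · unfold stPos
    rw [show n - Ts - 1 + Ts = n - 1 by omega]
  · unfold stPos
    rfl

/-- transfer along the internal shift bisimulation, post-spot zone -/
lemma transfer_post (hTs : 1 ≤ Ts) (ψ : PDLFormula AB Unit) {n m : ℕ}
    (hn : n0' Ms Ts dd + 1 ≤ n) (hm : n0 Ms Ts dd + 1 ≤ m) :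
    Sat (T2 Ms Ts dd) (stPos (PB_pos Ms Ts dd) 1 n) ψ ↔
      Sat (T2 Ms Ts dd) (stPos (PB_pos Ms Ts dd) 0 m) ψ := by
  refine bisim_sat (R2_bisim Ms Ts dd hTs) ψ (.inr ⟨?_, m - 1, by omega, ?_⟩)
  · unfold stPos
    congr 1
    ext : 1
    · rfl
    · show capIdx _ (PB_pos Ms Ts dd) (n - 1) = capIdx _ (PB_pos Ms Ts dd) (PB Ms Ts dd - 1)
      have : PB Ms Ts dd = n0' Ms Ts dd + 1 := rfl
      simp [capIdx]
      omega
  · unfold stPos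
    rfl

variable {C : Set (Language AB)}

/-- the shift lemma: far enough from the spot, truth along thread 1 of `T2`
is `Ts`-periodic -/
lemma shift_lemma (hMs : 1 ≤ Ms) (hTs : 1 ≤ Ts)
    (hper : ∀ L ∈ C, ∀ n, Ms ≤ n →
      ((∃ w ∈ L, bc AB.b w = n) ↔ (∃ w ∈ L, bc AB.b w = n + Ts))) :
    ∀ (ψ : PDLFormula AB Unit), UsesLangs C ψ → ∀ n, 1 ≤ n →
    n + Ts + Mu Ms Ts (md ψ) ≤ n0' Ms Ts dd →
    (Sat (T2 Ms Ts dd) (stPos (PB_pos Ms Ts dd) 1 n) ψ ↔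
      Sat (T2 Ms Ts dd) (stPos (PB_pos Ms Ts dd) 1 (n + Ts)) ψ) := by
  intro ψ
  induction ψ with
  | atom p =>
      intro hU n hn hcond
      cases p
      have hMu := Mu_pos Ms Ts 0
      have hmd : md (PDLFormula.atom () : PDLFormula AB Unit) = 0 := rfl
      rw [hmd] at hcond
      constructor
      · intro hl
        exfalso
        have := bouquet_label.mp hl
        simp [spots2, capIdx] at this
        have hPB : PB Ms Ts dd = n0' Ms Ts dd + 1 := rfl
        omega
      · intro hl
        exfalso
        have := bouquet_label.mp hl
        simp [spots2, capIdx] at this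
        have hPB : PB Ms Ts dd = n0' Ms Ts dd + 1 := rfl
        omega
  | neg ψ ih =>
      intro hU n hn hcond
      have hcond' : n + Ts + Mu Ms Ts (md ψ) ≤ n0' Ms Ts dd := by
        have := Mu_mono Ms Ts (show md ψ ≤ md (PDLFormula.neg ψ) by simp [md])
        omega
      exact not_congr (ih hU n hn hcond')
  | or ψ χ ih1 ih2 =>
      intro hU n hn hcond
      have h1 : n + Ts + Mu Ms Ts (md ψ) ≤ n0' Ms Ts dd := by
        have := Mu_mono Ms Ts (show md ψ ≤ md (PDLFormula.or ψ χ) by simp [md])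
        omega
      have h2 : n + Ts + Mu Ms Ts (md χ) ≤ n0' Ms Ts dd := by
        have := Mu_mono Ms Ts (show md χ ≤ md (PDLFormula.or ψ χ) by simp [md])
        omega
      exact or_congr (ih1 hU.1 n hn h1) (ih2 hU.2 n hn h2)
  | and ψ χ ih1 ih2 =>
      intro hU n hn hcond
      have h1 : n + Ts + Mu Ms Ts (md ψ) ≤ n0' Ms Ts dd := by
        have := Mu_mono Ms Ts (show md ψ ≤ md (PDLFormula.and ψ χ) by simp [md])
        omega
      have h2 : n + Ts + Mu Ms Ts (md χ) ≤ n0' Ms Ts dd := by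
        have := Mu_mono Ms Ts (show md χ ≤ md (PDLFormula.and ψ χ) by simp [md])
        omega
      exact and_congr (ih1 hU.1 n hn h1) (ih2 hU.2 n hn h2)
  | dia L ψ ih =>
      intro hU n hn hcond
      obtain ⟨hL, hUψ⟩ := hU
      have hmd : md (PDLFormula.dia L ψ) = md ψ + 1 := rfl
      rw [hmd, Mu_succ] at hcond
      erw [sat_dia, sat_dia]
      constructor
      · rintro ⟨w, t, hw, hp, hs⟩
        have ht := (stPos_path hn).mp hp
        subst ht
        set m := bc AB.b w with hm
        by_cases hbig : Ms + Ts ≤ m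
        · obtain ⟨w', hw', hbc'⟩ := (hper L hL (m - Ts) (by omega)).mpr ⟨w, hw, by omega⟩
          refine ⟨w', stPos (PB_pos Ms Ts dd) 1 (n + m), hw', ?_, hs⟩
          refine (stPos_path (by omega)).mpr ?_
          rw [hbc']
          congr 1
          omega
        · refine ⟨w, stPos (PB_pos Ms Ts dd) 1 (n + Ts + m), hw,
            (stPos_path (by omega)).mpr rfl, ?_⟩
          have hcond2 : (n + m) + Ts + Mu Ms Ts (md ψ) ≤ n0' Ms Ts dd := by omega
          have := ih hUψ (n + m) (by omega) hcond2
          rw [show n + Ts + m = (n + m) + Ts by omega]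
          exact this.mp hs
      · rintro ⟨w, t, hw, hp, hs⟩
        have ht := (stPos_path (show 1 ≤ n + Ts by omega)).mp hp
        subst ht
        set m := bc AB.b w with hm
        by_cases hbig : Ms ≤ m
        · obtain ⟨w', hw', hbc'⟩ := (hper L hL m hbig).mp ⟨w, hw, rfl⟩
          refine ⟨w', stPos (PB_pos Ms Ts dd) 1 (n + Ts + m), hw', ?_, hs⟩
          refine (stPos_path hn).mpr ?_
          rw [hbc']
          congr 1
          omega
        · refine ⟨w, stPos (PB_pos Ms Ts dd) 1 (n + m), hw,
            (stPos_path hn).mpr rfl, ?_⟩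
          have hcond2 : (n + m) + Ts + Mu Ms Ts (md ψ) ≤ n0' Ms Ts dd := by omega
          have := ih hUψ (n + m) (by omega) hcond2
          rw [show n + Ts + m = (n + m) + Ts by omega] at hs
          exact this.mpr hs
  | box L ψ ih =>
      intro hU n hn hcond
      obtain ⟨hL, hUψ⟩ := hU
      have hmd : md (PDLFormula.box L ψ) = md ψ + 1 := rfl
      rw [hmd, Mu_succ] at hcond
      erw [sat_box, sat_box]
      constructor
      · intro h w t hw hp
        have ht := (stPos_path (show 1 ≤ n + Ts by omega)).mp hp
        subst ht
        set m := bc AB.b w with hm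
        by_cases hbig : Ms ≤ m
        · obtain ⟨w', hw', hbc'⟩ := (hper L hL m hbig).mp ⟨w, hw, rfl⟩
          have := h w' (stPos (PB_pos Ms Ts dd) 1 (n + (m + Ts))) hw'
            ((stPos_path hn).mpr (by rw [hbc']))
          rw [show n + (m + Ts) = n + Ts + m by omega] at this
          exact this
        · have hsat := h w (stPos (PB_pos Ms Ts dd) 1 (n + m)) hw ((stPos_path hn).mpr rfl)
          have hcond2 : (n + m) + Ts + Mu Ms Ts (md ψ) ≤ n0' Ms Ts dd := by omega
          have := ih hUψ (n + m) (by omega) hcond2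
          rw [show n + Ts + m = (n + m) + Ts by omega]
          exact this.mp hsat
      · intro h w t hw hp
        have ht := (stPos_path hn).mp hp
        subst ht
        set m := bc AB.b w with hm
        by_cases hbig : Ms + Ts ≤ m
        · obtain ⟨w', hw', hbc'⟩ := (hper L hL (m - Ts) (by omega)).mpr ⟨w, hw, by omega⟩
          have := h w' (stPos (PB_pos Ms Ts dd) 1 (n + Ts + (m - Ts))) hw'
            ((stPos_path (show 1 ≤ n + Ts by omega)).mpr (by rw [hbc']))
          rw [show n + Ts + (m - Ts) = n + m by omega] at this
          exact this
        · have hsat := h w (stPos (PB_pos Ms Ts dd) 1 (n + Ts + m)) hw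
            ((stPos_path (show 1 ≤ n + Ts by omega)).mpr rfl)
          have hcond2 : (n + m) + Ts + Mu Ms Ts (md ψ) ≤ n0' Ms Ts dd := by omega
          have := ih hUψ (n + m) (by omega) hcond2
          rw [show n + Ts + m = (n + m) + Ts by omega] at hsat
          exact this.mpr hsat


/-- the bridge: any thread-1 endpoint reachable via `L` can be matched by a
thread-0 endpoint reachable via `L` with the same truth value -/
lemma bridge (hMs : 1 ≤ Ms) (hTs : 1 ≤ Ts)
    (hper : ∀ L ∈ C, ∀ n, Ms ≤ n →
      ((∃ w ∈ L, bc AB.b w = n) ↔ (∃ w ∈ L, bc AB.b w = n + Ts)))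
    (ψ : PDLFormula AB Unit) (hU : UsesLangs C ψ) (hmd : md ψ ≤ dd)
    {L : Language AB} (hL : L ∈ C) {m : ℕ} (hm : 1 ≤ m)
    (hNm : ∃ w ∈ L, bc AB.b w = m) :
    ∃ m', 1 ≤ m' ∧ (∃ w ∈ L, bc AB.b w = m') ∧
      (Sat (T2 Ms Ts dd) (stPos (PB_pos Ms Ts dd) 1 m) ψ ↔
        Sat (T2 Ms Ts dd) (stPos (PB_pos Ms Ts dd) 0 m') ψ) := by
  have hA : n0 Ms Ts dd = Ms + 2 * Ts + Mu Ms Ts dd + 1 := rfl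
  have hB : n0' Ms Ts dd = n0 Ms Ts dd + Ts := rfl
  have hMu := Mu_mono Ms Ts hmd
  have hMupos := Mu_pos Ms Ts (md ψ)
  by_cases hc1 : n0' Ms Ts dd + 1 ≤ m
  · obtain ⟨w', hw', hbc'⟩ := (hper L hL m (by omega)).mp hNm
    exact ⟨m + Ts, by omega, ⟨w', hw', hbc'⟩,
      transfer_post Ms Ts dd hTs ψ hc1 (by omega)⟩
  · by_cases hc2 : Ms + Ts ≤ m
    · obtain ⟨w0, hw0, hbc0⟩ := hNm
      obtain ⟨w', hw', hbc'⟩ := (hper L hL (m - Ts) (by omega)).mpr ⟨w0, hw0, by omega⟩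
      exact ⟨m - Ts, by omega, ⟨w', hw', hbc'⟩,
        transfer_pre Ms Ts dd hTs ψ (by omega) (by omega)⟩
    · refine ⟨m, hm, hNm, ?_⟩
      have hsh := shift_lemma Ms Ts dd hMs hTs hper ψ hU m hm (by omega)
      have htp := transfer_pre Ms Ts dd hTs ψ (n := m + Ts) (by omega) (by omega)
      rw [show m + Ts - Ts = m by omega] at htp
      exact hsh.trans htp

lemma path_a_iff {spots : Fin k → ℕ} {hP : 0 < PP} {n : ℕ}
    {s t : (bouquet k PP spots hP).S} :
    (bouquet k PP spots hP).Path s (List.replicate n AB.a) t ↔ t = s := by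
  induction n generalizing s with
  | zero => exact path_nil
  | succ n ih =>
      rw [List.replicate_succ, path_cons]
      constructor
      · rintro ⟨s', hs', hp⟩
        have : s' = s := hs'
        subst this
        exact ih.mp hp
      · rintro rfl
        exact ⟨_, rfl, ih.mpr rfl⟩

lemma bc_replicate (n : ℕ) : bc AB.b (List.replicate n AB.b) = n := by
  simp [bc]

lemma bc_replicate_a (n : ℕ) : bc AB.b (List.replicate n AB.a) = 0 := by
  simp [bc, List.count_replicate]

/-- the root equivalence -/
lemma root_equiv (hMs : 1 ≤ Ms) (hTs : 1 ≤ Ts)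
    (hper : ∀ L ∈ C, ∀ n, Ms ≤ n →
      ((∃ w ∈ L, bc AB.b w = n) ↔ (∃ w ∈ L, bc AB.b w = n + Ts))) :
    ∀ (ψ : PDLFormula AB Unit), UsesLangs C ψ → md ψ ≤ dd →
    (Sat (T1 Ms Ts dd) none ψ ↔ Sat (T2 Ms Ts dd) none ψ) := by
  intro ψ
  induction ψ with
  | atom p =>
      intro hU hmd
      cases p
      exact iff_of_false root_not_label root_not_label
  | neg ψ ih =>
      intro hU hmd
      exact not_congr (ih hU (by simp [md] at hmd ⊢; omega))
  | or ψ χ ih1 ih2 =>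
      intro hU hmd
      simp only [md, max_le_iff] at hmd
      exact or_congr (ih1 hU.1 hmd.1) (ih2 hU.2 hmd.2)
  | and ψ χ ih1 ih2 =>
      intro hU hmd
      simp only [md, max_le_iff] at hmd
      exact and_congr (ih1 hU.1 hmd.1) (ih2 hU.2 hmd.2)
  | dia L ψ ih =>
      intro hU hmd
      obtain ⟨hL, hUψ⟩ := hU
      have hmd' : md ψ ≤ dd := by simp [md] at hmd; omega
      erw [sat_dia, sat_dia]
      constructor
      · rintro ⟨w, t, hw, hp, hs⟩
        rcases root_path.mp hp with ⟨h0, rfl⟩ | ⟨h1, i, rfl⟩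
        · exact ⟨w, none, hw, root_path.mpr (.inl ⟨h0, rfl⟩), (ih hUψ hmd').mp hs⟩
        · have hi : i = 0 := by
            ext
            omega
          subst hi
          have hs2 := (transfer01 Ms Ts dd ψ (bc AB.b w)).mp hs
          exact ⟨w, _, hw, root_path.mpr (.inr ⟨h1, 0, rfl⟩), hs2⟩
      · rintro ⟨w, t, hw, hp, hs⟩
        rcases root_path.mp hp with ⟨h0, rfl⟩ | ⟨h1, i, rfl⟩
        · exact ⟨w, none, hw, root_path.mpr (.inl ⟨h0, rfl⟩), (ih hUψ hmd').mpr hs⟩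
        · by_cases hi : i = 0
          · subst hi
            have hs1 := (transfer01 Ms Ts dd ψ (bc AB.b w)).mpr hs
            exact ⟨w, _, hw, root_path.mpr (.inr ⟨h1, 0, rfl⟩), hs1⟩
          · have hi1 : i = 1 := by
              ext
              have := i.isLt
              have : i.val ≠ 0 := fun h => hi (by ext; exact h)
              omega
            subst hi1
            obtain ⟨m', hm'1, ⟨w', hw', hbc'⟩, hiff⟩ :=
              bridge Ms Ts dd hMs hTs hper ψ hUψ hmd' hL h1 ⟨w, hw, rfl⟩
            have hsat0 := hiff.mp hs
            have hsat1 := (transfer01 Ms Ts dd ψ m').mpr hsat0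
            refine ⟨w', stPos (PB_pos Ms Ts dd) 0 m', hw',
              root_path.mpr (.inr ⟨by omega, 0, by rw [hbc']⟩), hsat1⟩
  | box L ψ ih =>
      intro hU hmd
      obtain ⟨hL, hUψ⟩ := hU
      have hmd' : md ψ ≤ dd := by simp [md] at hmd; omega
      erw [sat_box, sat_box]
      constructor
      · intro h w t hw hp
        rcases root_path.mp hp with ⟨h0, rfl⟩ | ⟨h1, i, rfl⟩
        · exact (ih hUψ hmd').mp (h w none hw (root_path.mpr (.inl ⟨h0, rfl⟩)))
        · by_cases hi : i = 0
          · subst hi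
            have hs1 := h w (stPos (PB_pos Ms Ts dd) 0 (bc AB.b w)) hw
              (root_path.mpr (.inr ⟨h1, 0, rfl⟩))
            exact (transfer01 Ms Ts dd ψ (bc AB.b w)).mp hs1
          · have hi1 : i = 1 := by
              ext
              have := i.isLt
              have : i.val ≠ 0 := fun h => hi (by ext; exact h)
              omega
            subst hi1
            obtain ⟨m', hm'1, ⟨w', hw', hbc'⟩, hiff⟩ :=
              bridge Ms Ts dd hMs hTs hper ψ hUψ hmd' hL h1 ⟨w, hw, rfl⟩
            have hs1 := h w' (stPos (PB_pos Ms Ts dd) 0 m') hw'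
              (root_path.mpr (.inr ⟨by omega, 0, by rw [hbc']⟩))
            exact hiff.mpr ((transfer01 Ms Ts dd ψ m').mp hs1)
      · intro h w t hw hp
        rcases root_path.mp hp with ⟨h0, rfl⟩ | ⟨h1, i, rfl⟩
        · exact (ih hUψ hmd').mpr (h w none hw (root_path.mpr (.inl ⟨h0, rfl⟩)))
        · have hi : i = 0 := by
            ext
            omega
          subst hi
          have hs2 := h w (stPos (PB_pos Ms Ts dd) 0 (bc AB.b w)) hw
            (root_path.mpr (.inr ⟨h1, 0, rfl⟩))
          exact (transfer01 Ms Ts dd ψ (bc AB.b w)).mpr hs2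

/-- `T1` satisfies the property -/
lemma prop1 : DiaBoxProp (T1 Ms Ts dd) none := by
  have hA : n0 Ms Ts dd = Ms + 2 * Ts + Mu Ms Ts dd + 1 := rfl
  have hB : n0' Ms Ts dd = n0 Ms Ts dd + Ts := rfl
  have hPB : PB Ms Ts dd = n0' Ms Ts dd + 1 := rfl
  have hMu := Mu_pos Ms Ts dd
  refine ⟨n0 Ms Ts dd, by omega, none, path_a_iff.mpr rfl, ?_⟩
  intro t hp
  rcases root_path.mp hp with ⟨h0, rfl⟩ | ⟨h1, i, ht⟩
  · rw [bc_replicate] at h0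
    omega
  · rw [bc_replicate] at ht
    subst ht
    have hi : i = 0 := by ext; omega
    subst hi
    refine bouquet_label.mpr ?_
    omega

/-- `T2` does not satisfy the property -/
lemma prop2 (hTs : 1 ≤ Ts) : ¬ DiaBoxProp (T2 Ms Ts dd) none := by
  have hA : n0 Ms Ts dd = Ms + 2 * Ts + Mu Ms Ts dd + 1 := rfl
  have hB : n0' Ms Ts dd = n0 Ms Ts dd + Ts := rfl
  have hPB : PB Ms Ts dd = n0' Ms Ts dd + 1 := rfl
  have hMu := Mu_pos Ms Ts dd
  rintro ⟨n, hn, s, hpa, hb⟩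
  have hs : s = none := path_a_iff.mp hpa
  subst hs
  by_cases hcn : n = n0 Ms Ts dd
  · have hpath : (T2 Ms Ts dd).Path none (List.replicate n AB.b)
        (stPos (PB_pos Ms Ts dd) 1 n) := by
      refine root_path.mpr (.inr ⟨?_, 1, ?_⟩)
      · rw [bc_replicate]; omega
      · rw [bc_replicate]
    have hl := bouquet_label.mp (hb _ hpath)
    simp [spots2] at hl
    omega
  · have hpath : (T2 Ms Ts dd).Path none (List.replicate n AB.b)
        (stPos (PB_pos Ms Ts dd) 0 n) := by
      refine root_path.mpr (.inr ⟨?_, 0, ?_⟩)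
      · rw [bc_replicate]; omega
      · rw [bc_replicate]
    have hl := bouquet_label.mp (hb _ hpath)
    simp [spots2] at hl
    omega

end Params

end DiaBox


/-- The property `⟨aⁿ⟩[bⁿ]p` cannot be expressed in `PDL(CFL)`: for every finite
collection `C` of context-free languages over `{a,b}` and every `PDL(C)` formula
`φ`, there are two finite pointed LTSs, one satisfying the property and one not,
that `φ` does not distinguish. -/
theorem diaBox_not_pdl_cfl (C : Finset (Language AB))
    (hcf : ∀ L ∈ C, Language.IsContextFree L)
    (φ : PDLFormula AB Unit) (hφ : UsesLangs (↑C : Set (Language AB)) φ) :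
    ∃ (T₁ T₂ : LTS AB Unit) (s₁ : T₁.S) (s₂ : T₂.S),
      Finite T₁.S ∧ Finite T₂.S ∧
      DiaBoxProp T₁ s₁ ∧ ¬ DiaBoxProp T₂ s₂ ∧
      (Sat T₁ s₁ φ ↔ Sat T₂ s₂ φ) := by
  classical
  obtain ⟨Ms, Ts, hMs, hTs, hper⟩ := CFPump.finset_cf_periodic AB.b C hcf
  have hper' : ∀ L ∈ (↑C : Set (Language AB)), ∀ n, Ms ≤ n →
      ((∃ w ∈ L, CFPump.bc AB.b w = n) ↔ (∃ w ∈ L, CFPump.bc AB.b w = n + Ts)) :=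
    fun L hL => hper L (Finset.mem_coe.mp hL)
  refine ⟨DiaBox.T1 Ms Ts (md φ), DiaBox.T2 Ms Ts (md φ), none, none, ?_, ?_, ?_, ?_, ?_⟩
  · exact inferInstanceAs (Finite (Option (Fin 1 × Fin (DiaBox.PB Ms Ts (md φ)))))
  · exact inferInstanceAs (Finite (Option (Fin 2 × Fin (DiaBox.PB Ms Ts (md φ)))))
  · exact DiaBox.prop1 Ms Ts (md φ)
  · exact DiaBox.prop2 Ms Ts (md φ) hTs
  · exact DiaBox.root_equiv Ms Ts (md φ) hMs hTs hper' φ hφ (le_refl _)
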